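/- Let K be a field, R = K[x_1, …, x_n] graded by positive integer weights w_1, …, w_n with d = lcm(w_1, …, w_n), and let I ⊆ R be a nonzero W-homogeneous ideal. Let H_{R/I}(k) = dim_K (R/I)_k, where (R/I)_k is the image in R/I of the K-span of the monomials of weight k. Then for any k_0 ∈ ℕ and any polynomials P_0, …, P_{d−1} ∈ ℚ[x] with H_{R/I}(k) = P_{k mod d}(k) for all k ≥ k_0, every P_i has degree at most n − 2 (in particular, strictly less than n − 1, the common degree attained when I = (0)). -/

import Mathlib

open MvPolynomial Module Polynomial Filter

namespace Stmt17
open scoped Classical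

variable {n : ℕ}

/-- The finset of exponent vectors of weight `k`. -/
noncomputable def Sk (w : Fin n → ℕ) (k : ℕ) : Finset (Fin n →₀ ℕ) :=
  (Finset.Iic (Finsupp.equivFunOnFinite.symm fun _ => k)).filter
    fun α => Finsupp.weight w α = k

theorem weight_eq_sum (w : Fin n → ℕ) (α : Fin n →₀ ℕ) :
    Finsupp.weight w α = ∑ i, α i * w i := by
  rw [Finsupp.weight_apply, Finsupp.sum_fintype]
  · simp [smul_eq_mul]
  · intro i; simp

theorem mem_Sk {w : Fin n → ℕ} (hw : ∀ i, 0 < w i) {k : ℕ} {α : Fin n →₀ ℕ} :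
    α ∈ Sk w k ↔ Finsupp.weight w α = k := by
  constructor
  · exact fun h => (Finset.mem_filter.mp h).2
  · intro h
    refine Finset.mem_filter.mpr ⟨Finset.mem_Iic.mpr (Finsupp.le_def.mpr fun i => ?_), h⟩
    have h2 := Finsupp.le_weight w (hw i).ne' α
    rw [h] at h2
    simpa using h2

theorem monomials_linearIndependent (K : Type*) [Field K] :
    LinearIndependent K
      (fun α : Fin n →₀ ℕ => (monomial α (1 : K) : MvPolynomial (Fin n) K)) := by
  have := (MvPolynomial.basisMonomials (Fin n) K).linearIndependent
  rwa [MvPolynomial.coe_basisMonomials] at this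

theorem W_le_span (K : Type*) [Field K] {w : Fin n → ℕ} (hw : ∀ i, 0 < w i) (k : ℕ) :
    weightedHomogeneousSubmodule K w k ≤ Submodule.span K
      (((Sk w k).image fun α => (monomial α (1 : K) : MvPolynomial (Fin n) K)) :
        Finset (MvPolynomial (Fin n) K)) := by
  intro f hf
  rw [mem_weightedHomogeneousSubmodule] at hf
  nth_rewrite 1 [f.as_sum]
  refine Submodule.sum_mem _ fun α hα => ?_
  have h1 : (monomial α (coeff α f) : MvPolynomial (Fin n) K)
      = (coeff α f) • monomial α 1 := by
    rw [MvPolynomial.smul_monomial, smul_eq_mul, mul_one]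
  rw [h1]
  refine Submodule.smul_mem _ _ (Submodule.subset_span ?_)
  simp only [Finset.coe_image, Set.mem_image, Finset.mem_coe]
  exact ⟨α, (mem_Sk hw).mpr (hf (mem_support_iff.mp hα)), rfl⟩

set_option maxHeartbeats 1000000 in
theorem W_fd (K : Type*) [Field K] {w : Fin n → ℕ} (hw : ∀ i, 0 < w i) (k : ℕ) :
    FiniteDimensional K (weightedHomogeneousSubmodule K w k) := by
  haveI : FiniteDimensional K
      (Submodule.span K (M := MvPolynomial (Fin n) K) (((Sk w k).image fun α => (monomial α (1 : K) :
        MvPolynomial (Fin n) K)) : Finset (MvPolynomial (Fin n) K))) :=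
    FiniteDimensional.span_of_finite K (Finset.finite_toSet
      ((Sk w k).image fun α => (monomial α (1 : K) : MvPolynomial (Fin n) K)))
  exact Submodule.finiteDimensional_of_le (W_le_span K hw k)

set_option maxHeartbeats 1000000 in
theorem finrank_W_le (K : Type*) [Field K] {w : Fin n → ℕ} (hw : ∀ i, 0 < w i) (k : ℕ) :
    finrank K (weightedHomogeneousSubmodule K w k) ≤ (Sk w k).card := by
  haveI : FiniteDimensional K
      (Submodule.span K (M := MvPolynomial (Fin n) K) (((Sk w k).image fun α => (monomial α (1 : K) :
        MvPolynomial (Fin n) K)) : Finset (MvPolynomial (Fin n) K))) :=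
    FiniteDimensional.span_of_finite K (Finset.finite_toSet
      ((Sk w k).image fun α => (monomial α (1 : K) : MvPolynomial (Fin n) K)))
  calc finrank K (weightedHomogeneousSubmodule K w k)
      ≤ finrank K (Submodule.span K (((Sk w k).image fun α => (monomial α (1 : K) :
          MvPolynomial (Fin n) K)) : Finset (MvPolynomial (Fin n) K))) :=
        Submodule.finrank_mono (W_le_span K hw k)
    _ ≤ ((Sk w k).image fun α => (monomial α (1 : K) : MvPolynomial (Fin n) K)).card := by
        simpa [Set.finrank] using
          finrank_span_finset_le_card (R := K)
            ((Sk w k).image fun α => (monomial α (1 : K) : MvPolynomial (Fin n) K))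
    _ ≤ (Sk w k).card := Finset.card_image_le

theorem card_le_finrank {K V : Type*} [Field K] [AddCommGroup V] [Module K V]
    {ι : Type*} [Fintype ι] (p : Submodule K V) [FiniteDimensional K p]
    (v : ι → V) (hv : LinearIndependent K v) (hmem : ∀ i, v i ∈ p) :
    Fintype.card ι ≤ finrank K p := by
  have h2 : p.subtype ∘ (fun i => (⟨v i, hmem i⟩ : p)) = v := rfl
  have hv' : LinearIndependent K (fun i => (⟨v i, hmem i⟩ : p)) :=
    LinearIndependent.of_comp p.subtype (by rw [h2]; exact hv)
  exact hv'.fintype_card_le_finrank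

theorem card_Sk_split {w : Fin n → ℕ} (hw : ∀ i, 0 < w i) (i0 : Fin n) (A k : ℕ)
    (hk : A * w i0 ≤ k) :
    (Sk w k).card ≤ ((Sk w k).filter fun α => α i0 < A).card
      + (Sk w (k - A * w i0)).card := by
  classical
  have hsplit := Finset.card_filter_add_card_filter_not
    (s := Sk w k) (p := fun α => α i0 < A)
  have hbig : ((Sk w k).filter fun α => ¬ α i0 < A).card ≤ (Sk w (k - A * w i0)).card := by
    apply Finset.card_le_card_of_injOn (fun α => α - Finsupp.single i0 A)
    · intro α hα
      simp only [Finset.mem_coe, Finset.mem_filter, not_lt] at hα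
      obtain ⟨hαk, hA⟩ := hα
      have hle : Finsupp.single i0 A ≤ α := Finsupp.single_le_iff.mpr hA
      have hadd : (α - Finsupp.single i0 A) + Finsupp.single i0 A = α :=
        tsub_add_cancel_of_le hle
      have hwk : Finsupp.weight w α = k := (mem_Sk hw).mp hαk
      have hws : Finsupp.weight w (Finsupp.single i0 A) = A * w i0 := by
        rw [Finsupp.weight_apply, Finsupp.sum_single_index] <;> simp [smul_eq_mul]
      have hsum : Finsupp.weight w (α - Finsupp.single i0 A) + A * w i0 = k := by
        rw [← hws, ← map_add, hadd, hwk]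
      exact (mem_Sk hw).mpr (by beta_reduce; omega)
    · intro a ha b hb hab
      simp only [Finset.mem_coe, Finset.mem_filter, not_lt] at ha hb
      have ha' := tsub_add_cancel_of_le (Finsupp.single_le_iff.mpr ha.2)
      have hb' := tsub_add_cancel_of_le (Finsupp.single_le_iff.mpr hb.2)
      have hab' : a - Finsupp.single i0 A = b - Finsupp.single i0 A := hab
      rw [← ha', ← hb', hab']
  omega

theorem card_small_le {w : Fin n → ℕ} (hw : ∀ i, 0 < w i) (hn2 : 2 ≤ n) (A k : ℕ) :
    ((Sk w k).filter fun α => α ⟨0, by omega⟩ < A).card ≤ A * (k + 1) ^ (n - 2) := by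
  classical
  have hcard : (Finset.range A ×ˢ Fintype.piFinset
      fun _ : Fin (n - 2) => Finset.range (k + 1)).card = A * (k + 1) ^ (n - 2) := by
    simp [Finset.card_product, Fintype.card_piFinset]
  rw [← hcard]
  apply Finset.card_le_card_of_injOn
    (fun α => (α ⟨0, by omega⟩, fun j : Fin (n - 2) => α ⟨j.1 + 1, by omega⟩))
  · intro α hα
    simp only [Finset.mem_coe, Finset.mem_filter] at hα
    obtain ⟨hαk, hA⟩ := hα
    have hwk := (mem_Sk hw).mp hαk
    have h2 : ∀ i' : Fin n, α i' ≤ k := fun i' => by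
      have h3 := Finsupp.le_weight w (hw i').ne' α
      omega
    refine Finset.mem_product.mpr ⟨Finset.mem_range.mpr hA,
      Fintype.mem_piFinset.mpr fun j => Finset.mem_range.mpr ?_⟩
    exact Nat.lt_succ_of_le (h2 _)
  · intro a ha b hb hab
    simp only [Finset.mem_coe, Finset.mem_filter] at ha hb
    have hwa := (mem_Sk hw).mp ha.1
    have hwb := (mem_Sk hw).mp hb.1
    have h1 : a ⟨0, by omega⟩ = b ⟨0, by omega⟩ := congrArg Prod.fst hab
    have h2 : (fun j : Fin (n - 2) => a ⟨j.1 + 1, by omega⟩)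
        = fun j : Fin (n - 2) => b ⟨j.1 + 1, by omega⟩ := congrArg Prod.snd hab
    set L : Fin n := ⟨n - 1, by omega⟩ with hL
    have key : ∀ i : Fin n, i.1 < n - 1 → a i = b i := by
      intro i hi
      rcases Nat.eq_zero_or_pos i.1 with h0 | hpos
      · have : i = ⟨0, by omega⟩ := Fin.ext h0
        rw [this]; exact h1
      · have hj : (⟨i.1 - 1, by omega⟩ : Fin (n - 2)).1 + 1 = i.1 := by
          simp; omega
        have : i = ⟨(⟨i.1 - 1, by omega⟩ : Fin (n - 2)).1 + 1, by omega⟩ :=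
          Fin.ext hj.symm
        rw [this]
        exact congrFun h2 _
    apply Finsupp.ext
    intro i
    rcases lt_or_ge i.1 (n - 1) with hi | hi
    · exact key i hi
    · have hi' : i = L := by
        apply Fin.ext
        show i.1 = n - 1
        have h2' := i.2
        omega
      have hsum : ∀ c : Fin n →₀ ℕ, Finsupp.weight w c = k →
          ∑ x ∈ Finset.univ.erase L, c x * w x + c L * w L = k := by
        intro c hc
        rw [weight_eq_sum] at hc
        rw [Finset.sum_erase_add _ _ (Finset.mem_univ L)]
        exact hc
      have hA' := hsum a hwa
      have hB' := hsum b hwb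
      have heq : ∑ x ∈ Finset.univ.erase L, a x * w x
          = ∑ x ∈ Finset.univ.erase L, b x * w x := by
        refine Finset.sum_congr rfl fun x hx => ?_
        have hxL : x ≠ L := (Finset.mem_erase.mp hx).1
        have hx1 : x.1 < n - 1 := by
          have h2' := x.2
          refine lt_of_le_of_ne (by omega) fun h => hxL (Fin.ext ?_)
          exact h
        rw [key x hx1]
      have hmul : a L * w L = b L * w L := by omega
      have := Nat.eq_of_mul_eq_mul_right (hw L) hmul
      rw [hi']; exact this

theorem key_bound (w : Fin n → ℕ) (hw : ∀ i, 0 < w i)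
    (K : Type*) [Field K] (I : Ideal (MvPolynomial (Fin n) K))
    (g : MvPolynomial (Fin n) K) (hg0 : g ≠ 0) (hgI : g ∈ I) (A : ℕ) (i0 : Fin n)
    (hghom : g.IsWeightedHomogeneous w (A * w i0))
    (k : ℕ) (hk : A * w i0 ≤ k) :
    finrank K (Submodule.map (Ideal.Quotient.mkₐ K I).toLinearMap
      (weightedHomogeneousSubmodule K w k))
      ≤ ((Sk w k).filter fun α => α i0 < A).card := by
  classical
  set M := A * w i0 with hM
  set W := weightedHomogeneousSubmodule K w k with hW
  haveI : FiniteDimensional K W := W_fd K hw k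
  set φ := ((Ideal.Quotient.mkₐ K I).toLinearMap).domRestrict W with hφ
  have hrange : Submodule.map (Ideal.Quotient.mkₐ K I).toLinearMap W
      = LinearMap.range φ := (LinearMap.range_domRestrict _ _).symm
  have hrn : finrank K (LinearMap.range φ) + finrank K (LinearMap.ker φ)
      = finrank K W := LinearMap.finrank_range_add_finrank_ker φ
  have hWcnt : finrank K W ≤ (Sk w k).card := finrank_W_le K hw k
  have hmemW : ∀ α ∈ Sk w (k - M), g * monomial α (1 : K) ∈ W := by
    intro α hα
    rw [hW, mem_weightedHomogeneousSubmodule]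
    have h2 := hghom.mul
      (isWeightedHomogeneous_monomial w α (1 : K) ((mem_Sk hw).mp hα))
    have hMk : M + (k - M) = k := by omega
    rwa [hMk] at h2
  have hind : LinearIndependent K
      (fun α : (Sk w (k - M) : Finset _) => g * monomial α.1 (1 : K)) := by
    have h1 := (monomials_linearIndependent (n := n) K).comp
      (Subtype.val : (Sk w (k - M) : Finset _) → _) Subtype.val_injective
    have h2 := h1.map' (LinearMap.mulLeft K g)
      (LinearMap.ker_eq_bot.mpr (mul_right_injective₀ hg0))
    exact h2
  have hker : (Sk w (k - M)).card ≤ finrank K (LinearMap.ker φ) := by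
    have hmemW' : ∀ α : (Sk w (k - M) : Finset _),
        (⟨g * monomial α.1 (1 : K), hmemW α.1 α.2⟩ : W) ∈ LinearMap.ker φ := by
      intro α
      rw [LinearMap.mem_ker]
      simp only [hφ, LinearMap.domRestrict_apply, AlgHom.toLinearMap_apply,
        Ideal.Quotient.mkₐ_eq_mk]
      exact Ideal.Quotient.eq_zero_iff_mem.mpr (I.mul_mem_right _ hgI)
    have hindW : LinearIndependent K
        (fun α : (Sk w (k - M) : Finset _) =>
          (⟨g * monomial α.1 (1 : K), hmemW α.1 α.2⟩ : W)) := by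
      have h2 : W.subtype ∘ (fun α : (Sk w (k - M) : Finset _) =>
          (⟨g * monomial α.1 (1 : K), hmemW α.1 α.2⟩ : W))
          = fun α : (Sk w (k - M) : Finset _) => g * monomial α.1 (1 : K) := rfl
      exact LinearIndependent.of_comp W.subtype (by rw [h2]; exact hind)
    calc (Sk w (k - M)).card = Fintype.card (Sk w (k - M) : Finset _) :=
          (Fintype.card_coe _).symm
      _ ≤ finrank K (LinearMap.ker φ) :=
          card_le_finrank (LinearMap.ker φ) _ hindW hmemW'
  have hsplit := card_Sk_split hw i0 A k hk
  rw [← hM] at hsplit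
  rw [hrange]
  omega

theorem deg_le_of_bdd (p : ℚ[X]) (c : ℚ) (e : ℕ) (x : ℕ → ℚ)
    (hx : Tendsto x atTop atTop)
    (h0 : ∀ j, 0 ≤ p.eval (x j)) (h1 : ∀ j, p.eval (x j) ≤ c * (x j + 1) ^ e) :
    p.degree ≤ (e : WithBot ℕ) := by
  by_contra hdeg
  push_neg at hdeg
  have hp0 : p ≠ 0 := by
    intro h; rw [h, degree_zero] at hdeg; exact absurd hdeg (by simp)
  set B : ℚ[X] := c • ((Polynomial.X + 1) ^ e) with hB
  have hnd : B.natDegree ≤ e := by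
    refine le_trans (natDegree_smul_le _ _) ?_
    have h3 : ((Polynomial.X : ℚ[X]) + 1) = Polynomial.X + Polynomial.C 1 := by
      rw [Polynomial.C_1]
    rw [Polynomial.natDegree_pow, h3, Polynomial.natDegree_X_add_C, mul_one]
  have hdB : B.degree < p.degree := by
    refine lt_of_le_of_lt (le_trans degree_le_natDegree ?_) hdeg
    exact_mod_cast hnd
  have hlc : (p - B).leadingCoeff = p.leadingCoeff := leadingCoeff_sub_of_degree_lt hdB
  have hdq : (p - B).degree = p.degree := degree_sub_eq_left_of_degree_lt hdB
  have hlc0 : p.leadingCoeff ≠ 0 := leadingCoeff_ne_zero.mpr hp0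
  have hdegpos : 0 < p.degree := by
    refine lt_of_le_of_lt ?_ hdeg
    exact_mod_cast Nat.zero_le e
  have hevalB : ∀ j, B.eval (x j) = c * (x j + 1) ^ e := by
    intro j
    simp [hB, smul_eq_mul]
  rcases lt_or_gt_of_ne hlc0 with hneg | hpos
  · have ht := p.tendsto_atBot_of_leadingCoeff_nonpos hdegpos hneg.le
    obtain ⟨j, hj⟩ := ((ht.comp hx).eventually (eventually_lt_atBot (0 : ℚ))).exists
    exact absurd (h0 j) (not_le.mpr hj)
  · have ht := (p - B).tendsto_atTop_of_leadingCoeff_nonneg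
      (hdq ▸ hdegpos) (hlc ▸ hpos.le)
    obtain ⟨j, hj⟩ := ((ht.comp hx).eventually (eventually_gt_atTop (0 : ℚ))).exists
    have hle : eval (x j) (p - B) ≤ 0 := by
      rw [Polynomial.eval_sub, hevalB j]
      linarith [h1 j]
    exact absurd hle (not_le.mpr hj)

end Stmt17

open Stmt17 in
/-- Let `R = K[x_1,…,x_n]` be graded by positive integer weights with
`d = lcm(w_i)` and let `I ≠ 0` be a `W`-homogeneous ideal, with weighted Hilbert function
`H_{R/I}(k) = dim_K (R/I)_k`.  Then any quasi-polynomial `P_0, …, P_{d−1} ∈ ℚ[x]` with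
`H_{R/I}(k) = P_{k mod d}(k)` for all `k ≥ k₀` has every `P_i` of degree at most `n − 2`
(strictly less than `n − 1`, the degree attained when `I = (0)`). -/
theorem stmt_17 (n : ℕ) (hn : 1 ≤ n) (w : Fin n → ℕ) (hw : ∀ i, 0 < w i)
    (d : ℕ) (hd : d = Finset.lcm Finset.univ w)
    (K : Type*) [Field K]
    (I : Ideal (MvPolynomial (Fin n) K)) (hI : I ≠ ⊥)
    (hhom : ∃ S : Set (MvPolynomial (Fin n) K),
      (∀ f ∈ S, ∃ m : ℕ, MvPolynomial.IsWeightedHomogeneous w f m) ∧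
      I = Ideal.span S)
    (comp : ℕ → Submodule K (MvPolynomial (Fin n) K ⧸ I))
    (hcomp : ∀ k, comp k = Submodule.map (Ideal.Quotient.mkₐ K I).toLinearMap
      (MvPolynomial.weightedHomogeneousSubmodule K w k))
    (k₀ : ℕ) (P : ℕ → Polynomial ℚ)
    (hP : ∀ k, k₀ ≤ k → (Module.finrank K (comp k) : ℚ) = (P (k % d)).eval (k : ℚ)) :
    ∀ i, i < d → (P i).degree < ((n - 1 : ℕ) : WithBot ℕ) := by
  classical
  intro i hi
  have hd0 : 0 < d := by
    rcases Nat.eq_zero_or_pos d with h | h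
    · exfalso
      rw [h] at hd
      have h0 : (0 : ℕ) ∈ w '' (Finset.univ : Finset (Fin n)) :=
        Finset.lcm_eq_zero_iff.mp hd.symm
      obtain ⟨j, _, hj⟩ := h0
      exact (hw j).ne' hj
    · exact h
  obtain ⟨S, hS, hspan⟩ := hhom
  have hex : ∃ f ∈ S, f ≠ 0 := by
    by_contra h
    push_neg at h
    exact hI (hspan.trans (Ideal.span_eq_bot.mpr h))
  obtain ⟨f, hfS, hf0⟩ := hex
  obtain ⟨mf, hfhom⟩ := hS f hfS
  set i0 : Fin n := ⟨0, by omega⟩ with hi0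
  set A := mf with hA
  set g := f ^ (w i0) with hg
  have hg0 : g ≠ 0 := pow_ne_zero _ hf0
  have hgI : g ∈ I := Ideal.pow_mem_of_mem I (hspan ▸ Ideal.subset_span hfS) _ (hw i0)
  have hghom : g.IsWeightedHomogeneous w (A * w i0) := by
    rw [hg, mul_comm]
    have hall : ∀ t : ℕ, (f ^ t).IsWeightedHomogeneous w (t * mf) := by
      intro t
      induction t with
      | zero => simpa using MvPolynomial.isWeightedHomogeneous_one K w
      | succ t ih =>
        rw [pow_succ, Nat.succ_mul]
        exact ih.mul hfhom
    exact hall _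
  set M := A * w i0 with hM
  set J := k₀ + M with hJ
  set x : ℕ → ℕ := fun j => i + d * (J + j) with hx
  have hxval : ∀ j, x j = i + d * (J + j) := fun j => rfl
  have hxge : ∀ j, J + j ≤ x j := by
    intro j
    have h1 : J + j ≤ d * (J + j) := Nat.le_mul_of_pos_left _ hd0
    have h2 := hxval j
    omega
  have hxk₀ : ∀ j, k₀ ≤ x j := fun j => by have := hxge j; omega
  have hxM : ∀ j, M ≤ x j := fun j => by have := hxge j; omega
  have hmod : ∀ j, (x j) % d = i := by
    intro j
    rw [hx]
    simp only [Nat.add_mul_mod_self_left]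
    exact Nat.mod_eq_of_lt hi
  have heval : ∀ j, (P i).eval ((x j : ℚ)) = (Module.finrank K (comp (x j)) : ℚ) := by
    intro j
    have h2 := hP (x j) (hxk₀ j)
    rw [hmod j] at h2
    exact h2.symm
  have hbound : ∀ j, Module.finrank K (comp (x j))
      ≤ ((Sk w (x j)).filter fun α => α i0 < A).card := by
    intro j
    rw [hcomp]
    exact key_bound w hw K I g hg0 hgI A i0 hghom (x j) (hxM j)
  have hxinj : Function.Injective fun j => ((x j : ℕ) : ℚ) := by
    intro a b hab
    have hab' : ((x a : ℕ) : ℚ) = ((x b : ℕ) : ℚ) := hab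
    have h1 : x a = x b := Nat.cast_injective hab'
    have h2 : d * (J + a) = d * (J + b) := by
      have ha := hxval a
      have hb := hxval b
      omega
    have h3 := Nat.eq_of_mul_eq_mul_left hd0 h2
    omega
  by_cases hn2 : 2 ≤ n
  · have hdeg : (P i).degree ≤ ((n - 2 : ℕ) : WithBot ℕ) := by
      apply deg_le_of_bdd (P i) (A : ℚ) (n - 2) (fun j => ((x j : ℕ) : ℚ))
      · apply tendsto_atTop_mono (fun j => ?_) tendsto_natCast_atTop_atTop
        have : j ≤ x j := by have := hxge j; omega
        exact_mod_cast this
      · intro j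
        rw [heval j]
        positivity
      · intro j
        rw [heval j]
        have h2 := (hbound j).trans (card_small_le hw hn2 A (x j))
        calc ((Module.finrank K (comp (x j)) : ℕ) : ℚ)
            ≤ ((A * (x j + 1) ^ (n - 2) : ℕ) : ℚ) := by exact_mod_cast h2
          _ = (A : ℚ) * (((x j : ℕ) : ℚ) + 1) ^ (n - 2) := by push_cast; ring
    refine lt_of_le_of_lt hdeg ?_
    have : n - 2 < n - 1 := by omega
    exact_mod_cast this
  · have hn1 : n = 1 := by omega
    have hsmall : ∀ j, ((Sk w (x j)).filter fun α => α i0 < A).card = 0 := by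
      intro j
      rw [Finset.card_eq_zero, Finset.filter_eq_empty_iff]
      intro α hmem
      rw [not_lt]
      by_contra hlt
      push_neg at hlt
      have hwk := (mem_Sk hw).mp hmem
      rw [weight_eq_sum] at hwk
      have hone : ∑ i', α i' * w i' = α i0 * w i0 := by
        subst hn1
        simp [Fin.sum_univ_one]
        congr
      have hlt2 : α i0 * w i0 < A * w i0 :=
        Nat.mul_lt_mul_of_lt_of_le hlt (le_refl _) (hw i0)
      have := hxM j
      omega
    have hzero : ∀ j, (P i).IsRoot ((x j : ℕ) : ℚ) := by
      intro j
      have h2 := hbound j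
      rw [hsmall j] at h2
      have h3 : Module.finrank K (comp (x j)) = 0 := by omega
      have := heval j
      rw [h3] at this
      simpa [Polynomial.IsRoot] using this
    have hPz : P i = 0 :=
      Polynomial.eq_zero_of_infinite_isRoot _
        (Set.infinite_of_injective_forall_mem hxinj hzero)
    rw [hPz, Polynomial.degree_zero]
    exact_mod_cast WithBot.bot_lt_coe (n - 1)
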